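/- For each r ≥ 0, the B^r seminorm on Dirac k-chains in ℝⁿ is a norm: if A is a nonzero Dirac k-chain then ‖A‖_{B^r} > 0. -/

import Mathlib

set_option linter.unusedSectionVars false
set_option maxHeartbeats 1000000


noncomputable section

open Finsupp

variable {n : ℕ} {V : Type*} [NormedAddCommGroup V] [NormedSpace ℝ V]

/-- A Dirac `k`-chain in `ℝⁿ` is a finitely supported function from points of `ℝⁿ` to
`k`-vectors (modelled by a normed space `V`); the `k`-element `(p;α)` is `Finsupp.single p α`. -/
abbrev DiracChain (n : ℕ) (V : Type*) [NormedAddCommGroup V] [NormedSpace ℝ V] :=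
  EuclideanSpace ℝ (Fin n) →₀ V

/-- Translation `T_u` of a Dirac chain through the vector `u`. -/
def translateChain (u : EuclideanSpace ℝ (Fin n)) (A : DiracChain n V) : DiracChain n V :=
  Finsupp.mapDomain (· + u) A

/-- The `j`-difference `k`-chain `Δ_{σ}(p;α)` for `σ = u₁∘⋯∘u_j`: the iterated difference
`(T_{u_1}-Id)⋯(T_{u_j}-Id)(p;α)`, written out as the alternating sum over subsets. -/
def diffChain (p : EuclideanSpace ℝ (Fin n)) (α : V) {j : ℕ}
    (u : Fin j → EuclideanSpace ℝ (Fin n)) : DiracChain n V :=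
  ∑ S : Finset (Fin j), ((-1 : ℝ) ^ (j - S.card)) •
    Finsupp.single (p + ∑ i ∈ S, u i) α

/-- The set of costs `Σᵢ ‖σᵢ‖‖αᵢ‖` of decompositions of `A` into difference chains of order
at most `r`. -/
def BnormSet (r : ℕ) (A : DiracChain n V) : Set ℝ :=
  {c | ∃ (m : ℕ) (j : Fin m → ℕ) (p : Fin m → EuclideanSpace ℝ (Fin n)) (α : Fin m → V)
      (u : ∀ i : Fin m, Fin (j i) → EuclideanSpace ℝ (Fin n)),
    (∀ i, j i ≤ r) ∧ (A = ∑ i, diffChain (p i) (α i) (u i)) ∧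
    c = ∑ i, (∏ l, ‖u i l‖) * ‖α i‖}

/-- The `B^r` seminorm of a Dirac chain: the infimum over all decompositions into difference
chains of order at most `r` of the total cost. -/
def Bnorm (r : ℕ) (A : DiracChain n V) : ℝ :=
  sInf (BnormSet r A)

/-- Evaluation of an exterior form `ω` (a function assigning to each point a linear functional
on `k`-vectors) on a Dirac chain. -/
def formEval (ω : EuclideanSpace ℝ (Fin n) → V →ₗ[ℝ] ℝ) (A : DiracChain n V) : ℝ :=
  A.sum fun p α => ω p α


section BnormHelpers

variable {E : Type*} [NormedAddCommGroup E] [NormedSpace ℝ E]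

lemma itfd_shift (f : E → ℝ) (hf : ∀ m : ℕ, ContDiff ℝ m f) (c : E) :
    ∀ (j : ℕ) (x : E),
      iteratedFDeriv ℝ j (fun y => f (y + c)) x = iteratedFDeriv ℝ j f (x + c) := by
  intro j
  induction j with
  | zero =>
    intro x; ext m; simp [iteratedFDeriv_zero_apply]
  | succ j IH =>
    intro x; ext m
    have hdiff : DifferentiableAt ℝ (iteratedFDeriv ℝ j f) (x + c) :=
      ((hf (j + 1)).differentiable_iteratedFDeriv (by exact_mod_cast lt_add_one j)) (x + c)
    have hτ : HasFDerivAt (fun y : E => y + c) (ContinuousLinearMap.id ℝ E) x :=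
      (hasFDerivAt_id x).add_const c
    have h2 : fderiv ℝ ((iteratedFDeriv ℝ j f) ∘ fun y => y + c) x
        = fderiv ℝ (iteratedFDeriv ℝ j f) (x + c) := by
      have h := (hdiff.hasFDerivAt.comp x hτ).fderiv
      simpa using h
    have h1 : fderiv ℝ (iteratedFDeriv ℝ j (fun y => f (y + c))) x
        = fderiv ℝ ((iteratedFDeriv ℝ j f) ∘ fun y => y + c) x := by
      congr 1; funext y; exact IH y
    rw [iteratedFDeriv_succ_apply_left, iteratedFDeriv_succ_apply_left, h1, h2]

lemma altsum_succ (f : E → ℝ) (j : ℕ) (u : Fin (j + 1) → E) (p : E) :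
    ∑ S : Finset (Fin (j + 1)), (-1 : ℝ) ^ (j + 1 - S.card) * f (p + ∑ i ∈ S, u i)
    = ∑ T : Finset (Fin j), (-1 : ℝ) ^ (j - T.card) *
        ((f ((p + ∑ i ∈ T, Fin.tail u i) + u 0)) - f (p + ∑ i ∈ T, Fin.tail u i)) := by
  classical
  set emb : Fin j ↪ Fin (j + 1) := ⟨Fin.succ, Fin.succ_injective j⟩ with hemb
  have h0 : (0 : Fin (j + 1)) ∉ Finset.univ.map emb := by
    simp only [Finset.mem_map, hemb, Function.Embedding.coeFn_mk]
    rintro ⟨a, -, ha⟩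
    exact Fin.succ_ne_zero a ha
  have huniv : (Finset.univ : Finset (Fin (j + 1))) = insert 0 (Finset.univ.map emb) := by
    rw [Fin.univ_succ, Finset.cons_eq_insert]
  have hpow : (Finset.univ.map emb).powerset
      = (Finset.univ : Finset (Finset (Fin j))).image (fun T => T.map emb) := by
    ext T
    simp only [Finset.mem_powerset, Finset.subset_map_iff, Finset.mem_image, Finset.mem_univ,
      true_and]
    constructor
    · rintro ⟨u', -, hu'⟩; exact ⟨u', hu'.symm⟩
    · rintro ⟨u', hu'⟩; exact ⟨u', Finset.subset_univ _, hu'.symm⟩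
  have hinj : ∀ T ∈ (Finset.univ : Finset (Finset (Fin j))),
      ∀ T' ∈ (Finset.univ : Finset (Finset (Fin j))),
      T.map emb = T'.map emb → T = T' := fun T _ T' _ h => Finset.map_injective emb h
  have hnotmem : ∀ T : Finset (Fin j), (0 : Fin (j + 1)) ∉ T.map emb := by
    intro T hT
    simp only [Finset.mem_map, hemb, Function.Embedding.coeFn_mk] at hT
    obtain ⟨a, -, ha⟩ := hT
    exact Fin.succ_ne_zero a ha
  have hsumT : ∀ T : Finset (Fin j), ∑ i ∈ T.map emb, u i = ∑ i ∈ T, Fin.tail u i := by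
    intro T; rw [Finset.sum_map]; rfl
  have hcardle : ∀ T : Finset (Fin j), T.card ≤ j := fun T => by
    simpa using Finset.card_le_univ T
  calc
    ∑ S : Finset (Fin (j + 1)), (-1 : ℝ) ^ (j + 1 - S.card) * f (p + ∑ i ∈ S, u i)
      = ∑ S ∈ (insert (0 : Fin (j+1)) (Finset.univ.map emb)).powerset,
          (-1 : ℝ) ^ (j + 1 - S.card) * f (p + ∑ i ∈ S, u i) := by
        rw [← huniv, Finset.powerset_univ]
    _ = ∑ T ∈ (Finset.univ.map emb).powerset, (-1 : ℝ) ^ (j + 1 - T.card) * f (p + ∑ i ∈ T, u i)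
        + ∑ T ∈ (Finset.univ.map emb).powerset,
            (-1 : ℝ) ^ (j + 1 - (insert 0 T).card) * f (p + ∑ i ∈ insert 0 T, u i) :=
      Finset.sum_powerset_insert h0 _
    _ = ∑ T : Finset (Fin j), (-1 : ℝ) ^ (j + 1 - (T.map emb).card) * f (p + ∑ i ∈ T.map emb, u i)
        + ∑ T : Finset (Fin j), (-1 : ℝ) ^ (j + 1 - (insert 0 (T.map emb)).card) *
            f (p + ∑ i ∈ insert 0 (T.map emb), u i) := by
      rw [hpow, Finset.sum_image hinj, Finset.sum_image hinj]
    _ = ∑ T : Finset (Fin j), (-1 : ℝ) ^ (j - T.card) *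
        ((f ((p + ∑ i ∈ T, Fin.tail u i) + u 0)) - f (p + ∑ i ∈ T, Fin.tail u i)) := by
      rw [← Finset.sum_add_distrib]
      apply Finset.sum_congr rfl
      intro T _
      rw [Finset.sum_insert (hnotmem T), Finset.card_insert_of_notMem (hnotmem T),
        Finset.card_map, hsumT]
      have hle := hcardle T
      have hc : j + 1 - T.card = (j - T.card) + 1 := by omega
      have hc' : j + 1 - (T.card + 1) = j - T.card := by omega
      rw [hc, hc', pow_succ]
      have : p + (u 0 + ∑ i ∈ T, Fin.tail u i) = (p + ∑ i ∈ T, Fin.tail u i) + u 0 := by abel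
      rw [this]
      ring

lemma altsum_bound : ∀ (j : ℕ) (f : E → ℝ), (∀ m : ℕ, ContDiff ℝ m f) → ∀ (M : ℝ),
    (∀ x, ‖iteratedFDeriv ℝ j f x‖ ≤ M) → ∀ (u : Fin j → E) (p : E),
    |∑ S : Finset (Fin j), (-1 : ℝ) ^ (j - S.card) * f (p + ∑ i ∈ S, u i)|
      ≤ M * ∏ i, ‖u i‖ := by
  intro j
  induction j with
  | zero =>
    intro f hf M hM u p
    rw [show (Finset.univ : Finset (Finset (Fin 0))) = {∅} from by
      ext S
      simp only [Finset.mem_univ, Finset.mem_singleton, true_iff]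
      exact Finset.eq_empty_of_isEmpty S, Finset.sum_singleton]
    have h0 := hM p
    rw [norm_iteratedFDeriv_zero] at h0
    simpa using h0
  | succ j IH =>
    intro f hf M hM u p
    set c := u 0 with hc
    set g := fun y => f (y + c) - f y with hg
    have hgs : ∀ m : ℕ, ContDiff ℝ m g := by
      intro m
      have h1 : ContDiff ℝ m (fun y => f (y + c)) :=
        (hf m).comp (contDiff_id.add contDiff_const)
      exact h1.sub (hf m)
    have hMg : ∀ x, ‖iteratedFDeriv ℝ j g x‖ ≤ M * ‖c‖ := by
      intro x
      have h1 : ContDiff ℝ j (fun y => f (y + c)) :=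
        (hf j).comp (contDiff_id.add contDiff_const)
      have h2 : ContDiff ℝ j (-f) := (hf j).neg
      have hgeq : g = (fun y => f (y + c)) + (-f) := by
        funext y; simp [hg, sub_eq_add_neg]
      rw [hgeq, iteratedFDeriv_add_apply h1.contDiffAt h2.contDiffAt, itfd_shift f hf c j x,
        iteratedFDeriv_neg_apply, ← sub_eq_add_neg]
      have hd : ∀ y ∈ (Set.univ : Set E), DifferentiableAt ℝ (iteratedFDeriv ℝ j f) y :=
        fun y _ => ((hf (j + 1)).differentiable_iteratedFDeriv (by exact_mod_cast lt_add_one j)) y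
      have hb : ∀ y ∈ (Set.univ : Set E), ‖fderiv ℝ (iteratedFDeriv ℝ j f) y‖ ≤ M :=
        fun y _ => by rw [norm_fderiv_iteratedFDeriv]; exact hM y
      have := convex_univ.norm_image_sub_le_of_norm_fderiv_le hd hb
        (Set.mem_univ x) (Set.mem_univ (x + c))
      simpa [add_sub_cancel_left] using this
    have hIH := IH g hgs (M * ‖c‖) hMg (Fin.tail u) p
    rw [altsum_succ f j u p]
    calc |∑ T : Finset (Fin j), (-1 : ℝ) ^ (j - T.card) *
          ((f ((p + ∑ i ∈ T, Fin.tail u i) + u 0)) - f (p + ∑ i ∈ T, Fin.tail u i))|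
        = |∑ T : Finset (Fin j), (-1 : ℝ) ^ (j - T.card) * g (p + ∑ i ∈ T, Fin.tail u i)| := rfl
      _ ≤ M * ‖c‖ * ∏ i : Fin j, ‖Fin.tail u i‖ := hIH
      _ = M * ∏ i : Fin (j + 1), ‖u i‖ := by
          rw [Fin.prod_univ_succ]
          simp only [hc]
          ring_nf
          rfl

end BnormHelpers

lemma diffChain_zero (p : EuclideanSpace ℝ (Fin n)) (α : V)
    (u : Fin 0 → EuclideanSpace ℝ (Fin n)) :
    diffChain p α u = Finsupp.single p α := by
  unfold diffChain
  rw [show (Finset.univ : Finset (Finset (Fin 0))) = {∅} from by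
    ext S
    simp only [Finset.mem_univ, Finset.mem_singleton, true_iff]
    exact Finset.eq_empty_of_isEmpty S, Finset.sum_singleton]
  simp


/-- for each `r ≥ 0` the `B^r` seminorm on Dirac `k`-chains is a norm: if `A` is
a nonzero Dirac chain, then `‖A‖_{B^r} > 0`. -/
theorem Bnorm_pos_of_ne_zero (n r : ℕ) {V : Type*} [NormedAddCommGroup V] [NormedSpace ℝ V]
    (A : DiracChain n V) (hA : A ≠ 0) :
    0 < Bnorm r A := by
  classical
  -- a point where A is nonzero
  obtain ⟨p₀, hp₀⟩ : ∃ p₀, A p₀ ≠ 0 := by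
    by_contra h
    push_neg at h
    exact hA (Finsupp.ext fun q => h q)
  set α₀ := A p₀ with hα₀
  obtain ⟨ℓ, hℓnorm, hℓ⟩ := exists_dual_vector ℝ α₀ (norm_ne_zero_iff.2 hp₀)
  -- the bump function
  set s : Finset ℝ := insert 1 ((A.support.erase p₀).image (dist p₀)) with hs
  have hsne : s.Nonempty := Finset.insert_nonempty _ _
  set R : ℝ := s.min' hsne with hR
  have hRpos : 0 < R := by
    have hmem : R ∈ s := s.min'_mem hsne
    rcases Finset.mem_insert.1 hmem with h | h
    · rw [h]; norm_num
    · obtain ⟨q, hq, hqd⟩ := Finset.mem_image.1 h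
      have hqne : q ≠ p₀ := (Finset.mem_erase.1 hq).1
      rw [← hqd]
      exact dist_pos.2 (fun h' => hqne h'.symm)
  set φb : ContDiffBump p₀ := ⟨R / 2, R, by positivity, by linarith⟩ with hφb
  set f : EuclideanSpace ℝ (Fin n) → ℝ := ⇑φb with hf
  have hf1 : f p₀ = 1 := φb.one_of_mem_closedBall (by
    simp only [Metric.mem_closedBall, dist_self]
    positivity)
  have hf0 : ∀ q, q ∈ A.support → q ≠ p₀ → f q = 0 := by
    intro q hq hne
    apply φb.zero_of_le_dist
    show R ≤ dist q p₀
    rw [dist_comm]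
    exact s.min'_le _ (Finset.mem_insert_of_mem
      (Finset.mem_image_of_mem _ (Finset.mem_erase.2 ⟨hne, hq⟩)))
  have hsmooth : ∀ m : ℕ, ContDiff ℝ m f := by
    intro m
    exact_mod_cast φb.contDiff (n := (m : ℕ∞))
  -- bounds on derivatives
  have hbnd : ∀ m : ℕ, ∃ C, ∀ x, ‖iteratedFDeriv ℝ m f x‖ ≤ C := by
    intro m
    exact ((hsmooth m).continuous_iteratedFDeriv le_rfl).bounded_above_of_compact_support
      (φb.hasCompactSupport.iteratedFDeriv (𝕜 := ℝ) m)
  choose Mb hMb using hbnd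
  have hMbnonneg : ∀ m, 0 ≤ Mb m := fun m => le_trans (norm_nonneg _) (hMb m 0)
  set M : ℝ := 1 + ∑ m ∈ Finset.range (r + 1), Mb m with hM
  have hMpos : 0 < M := by
    have : 0 ≤ ∑ m ∈ Finset.range (r + 1), Mb m :=
      Finset.sum_nonneg fun m _ => hMbnonneg m
    linarith
  have hMle : ∀ m, m ≤ r → Mb m ≤ M := by
    intro m hm
    have h1 : Mb m ≤ ∑ k ∈ Finset.range (r + 1), Mb k :=
      Finset.single_le_sum (fun k _ => hMbnonneg k) (Finset.mem_range.2 (by omega))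
    linarith
  -- the linear functional
  set Φ : DiracChain n V →ₗ[ℝ] ℝ :=
    Finsupp.lsum ℝ (fun q => f q • (ℓ.toLinearMap : V →ₗ[ℝ] ℝ)) with hΦ
  have hΦsingle : ∀ q β, Φ (Finsupp.single q β) = f q * ℓ β := by
    intro q β
    simp [hΦ, Finsupp.sum_single_index]
  have hΦA : Φ A = ‖α₀‖ := by
    have : Φ A = ∑ q ∈ A.support, f q * ℓ (A q) := by
      simp only [hΦ, Finsupp.lsum_apply]
      rfl
    rw [this]
    rw [Finset.sum_eq_single p₀]
    · rw [hf1, one_mul, ← hα₀, hℓ]; norm_cast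
    · intro q hq hne
      rw [hf0 q hq hne, zero_mul]
    · intro h
      exact absurd (Finsupp.notMem_support_iff.1 h) hp₀
  -- bound for Φ on difference chains
  have hkey : ∀ (m : ℕ), m ≤ r → ∀ (p : EuclideanSpace ℝ (Fin n)) (α : V)
      (u : Fin m → EuclideanSpace ℝ (Fin n)),
      |Φ (diffChain p α u)| ≤ M * ((∏ l, ‖u l‖) * ‖α‖) := by
    intro m hm p α u
    have hΦd : Φ (diffChain p α u)
        = (∑ S : Finset (Fin m), (-1 : ℝ) ^ (m - S.card) * f (p + ∑ i ∈ S, u i)) * ℓ α := by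
      unfold diffChain
      rw [map_sum, Finset.sum_mul]
      apply Finset.sum_congr rfl
      intro S _
      rw [map_smul, hΦsingle]
      simp [mul_assoc]
    rw [hΦd, abs_mul]
    have h1 : |∑ S : Finset (Fin m), (-1 : ℝ) ^ (m - S.card) * f (p + ∑ i ∈ S, u i)|
        ≤ Mb m * ∏ l, ‖u l‖ := altsum_bound m f hsmooth (Mb m) (hMb m) u p
    have h2 : |ℓ α| ≤ ‖α‖ := by
      calc |ℓ α| ≤ ‖ℓ‖ * ‖α‖ := ℓ.le_opNorm α
        _ = ‖α‖ := by rw [hℓnorm, one_mul]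
    calc |∑ S : Finset (Fin m), (-1 : ℝ) ^ (m - S.card) * f (p + ∑ i ∈ S, u i)| * |ℓ α|
        ≤ (Mb m * ∏ l, ‖u l‖) * ‖α‖ := by
          apply mul_le_mul h1 h2 (abs_nonneg _)
          exact mul_nonneg (hMbnonneg m) (Finset.prod_nonneg fun l _ => norm_nonneg _)
      _ ≤ (M * ∏ l, ‖u l‖) * ‖α‖ := by
          apply mul_le_mul_of_nonneg_right _ (norm_nonneg α)
          exact mul_le_mul_of_nonneg_right (hMle m hm)
            (Finset.prod_nonneg fun l _ => norm_nonneg _)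
      _ = M * ((∏ l, ‖u l‖) * ‖α‖) := by ring
  -- lower bound for all decomposition costs
  have hlb : ∀ c ∈ BnormSet r A, ‖α₀‖ / M ≤ c := by
    rintro c ⟨m, j, p, α, u, hjr, hAeq, hceq⟩
    have hcnonneg : 0 ≤ c := by
      rw [hceq]
      exact Finset.sum_nonneg fun i _ => mul_nonneg
        (Finset.prod_nonneg fun l _ => norm_nonneg _) (norm_nonneg _)
    have hbound : ‖α₀‖ ≤ M * c := by
      calc ‖α₀‖ = Φ A := hΦA.symm
        _ ≤ |Φ A| := le_abs_self _
        _ = |∑ i, Φ (diffChain (p i) (α i) (u i))| := by rw [hAeq, map_sum]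
        _ ≤ ∑ i, |Φ (diffChain (p i) (α i) (u i))| := Finset.abs_sum_le_sum_abs _ _
        _ ≤ ∑ i, M * ((∏ l, ‖u i l‖) * ‖α i‖) :=
            Finset.sum_le_sum fun i _ => hkey (j i) (hjr i) (p i) (α i) (u i)
        _ = M * c := by rw [hceq, Finset.mul_sum]
    rw [div_le_iff₀ hMpos]
    linarith [hbound, mul_comm M c]
  -- the set is nonempty
  have hne : (BnormSet r A).Nonempty := by
    let e := A.support.equivFin
    refine ⟨_, A.support.card, fun _ => 0,
      fun i => (e.symm i : EuclideanSpace ℝ (Fin n)),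
      fun i => A (e.symm i : EuclideanSpace ℝ (Fin n)),
      fun i => (fun _ => 0), fun i => Nat.zero_le r, ?_, rfl⟩
    calc A = ∑ q ∈ A.support, Finsupp.single q (A q) := by
            conv_lhs => rw [← Finsupp.sum_single A]
            rfl
      _ = ∑ x : A.support, Finsupp.single (x : EuclideanSpace ℝ (Fin n)) (A x) :=
            (Finset.sum_coe_sort _ _).symm
      _ = ∑ i : Fin A.support.card,
            Finsupp.single (e.symm i : EuclideanSpace ℝ (Fin n)) (A (e.symm i)) :=
            (Equiv.sum_comp e.symm
              (fun x : A.support => Finsupp.single (x : EuclideanSpace ℝ (Fin n)) (A x))).symm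
      _ = ∑ i : Fin A.support.card, diffChain (e.symm i : EuclideanSpace ℝ (Fin n))
            (A (e.symm i)) (fun _ : Fin 0 => (0 : EuclideanSpace ℝ (Fin n))) := by
            apply Finset.sum_congr rfl
            intro i _
            rw [diffChain_zero]
  have hpos : 0 < ‖α₀‖ / M := by
    apply div_pos _ hMpos
    exact norm_pos_iff.2 hp₀
  exact lt_of_lt_of_le hpos (le_csInf hne hlb)


end
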